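/- Let C be a self-dual code of length n over Z_{2^m} and let C_0 = {c ∈ C : wt_E(c) ≡ 0 (mod 2^{m+1})}, where wt_E is the Euclidean weight. Then C_0 is an additive subgroup of C, and if C contains a codeword of Euclidean weight not divisible by 2^{m+1} (i.e. C is Type I), then C_0 has index 2 in C. -/

import Mathlib

open Finset

/-- Standard bilinear (dot) product on `Fin n → R`. -/
def dotp {R : Type*} [CommRing R] {n : ℕ} (u v : Fin n → R) : R := ∑ i, u i * v i

/-- Dual of a set of vectors with respect to the standard bilinear form. -/
def dualCode {R : Type*} [CommRing R] {n : ℕ} (S : Set (Fin n → R)) : Set (Fin n → R) :=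
  {v | ∀ u ∈ S, dotp u v = 0}

/-- Euclidean weight of an element of `ZMod N`. -/
def wtE {N : ℕ} (a : ZMod N) : ℕ := min (a.val ^ 2) ((N - a.val) ^ 2)

/-- Euclidean weight of a vector. -/
def wtEv {N n : ℕ} (v : Fin n → ZMod N) : ℕ := ∑ i, wtE (v i)

/-- Doubly-even subcode (as a set): codewords of Euclidean weight divisible by 2^(m+1). -/
def deSub (m n : ℕ) (C : AddSubgroup (Fin n → ZMod (2 ^ m))) : Set (Fin n → ZMod (2 ^ m)) :=
  {c | c ∈ C ∧ 2 ^ (m + 1) ∣ wtEv c}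

section aux

lemma modEq_sum {α : Type*} (s : Finset α) (f g : α → ℕ) (N : ℕ)
    (h : ∀ i ∈ s, f i ≡ g i [MOD N]) : (∑ i ∈ s, f i) ≡ (∑ i ∈ s, g i) [MOD N] := by
  classical
  induction s using Finset.induction_on with
  | empty => simp [Nat.ModEq.refl]
  | insert a s hx ih =>
    rw [Finset.sum_insert hx, Finset.sum_insert hx]
    exact (h a (Finset.mem_insert_self a s)).add
      (ih fun i hi => h i (Finset.mem_insert_of_mem hi))

/-- `wtE a ≡ a.val ^ 2 [MOD 2^(m+1)]` when `m ≥ 1`. -/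
lemma wtE_modEq (k : ℕ) (a : ZMod (2 ^ (k + 1))) :
    wtE a ≡ a.val ^ 2 [MOD 2 ^ (k + 2)] := by
  haveI : NeZero (2 ^ (k + 1)) := ⟨pow_ne_zero _ two_ne_zero⟩
  have hle : a.val ≤ 2 ^ (k + 1) := le_of_lt (ZMod.val_lt a)
  unfold wtE
  rcases le_total (a.val ^ 2) ((2 ^ (k + 1) - a.val) ^ 2) with h | h
  · rw [min_eq_left h]
  · rw [min_eq_right h, Nat.modEq_iff_dvd]
    refine ⟨(a.val : ℤ) - 2 ^ k, ?_⟩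
    push_cast [Nat.cast_sub hle]
    ring

/-- squares of ModEq-mod-2^(k+1) naturals are ModEq mod 2^(k+2). -/
lemma sq_modEq (k : ℕ) {a b : ℕ} (h : a ≡ b [MOD 2 ^ (k + 1)]) :
    a ^ 2 ≡ b ^ 2 [MOD 2 ^ (k + 2)] := by
  rw [Nat.modEq_iff_dvd] at h ⊢
  obtain ⟨t, ht⟩ := h
  push_cast at ht
  refine ⟨t * (2 ^ k * t + a), ?_⟩
  have hb : (b : ℤ) = a + 2 ^ (k + 1) * t := by linarith
  push_cast
  rw [hb]; ring

lemma wtEv_modEq_sum_sq (k n : ℕ) (v : Fin n → ZMod (2 ^ (k + 1))) :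
    wtEv v ≡ (∑ i, (v i).val ^ 2) [MOD 2 ^ (k + 2)] :=
  modEq_sum _ _ _ _ fun i _ => wtE_modEq k (v i)

lemma sum_sq_add (k n : ℕ) (x y : Fin n → ZMod (2 ^ (k + 1))) :
    (∑ i, ((x + y) i).val ^ 2) ≡
      (∑ i, (x i).val ^ 2) + (∑ i, (y i).val ^ 2) +
        2 * ∑ i, (x i).val * (y i).val [MOD 2 ^ (k + 2)] := by
  haveI : NeZero (2 ^ (k + 1)) := ⟨pow_ne_zero _ two_ne_zero⟩
  have h1 : (∑ i, ((x + y) i).val ^ 2) ≡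
      (∑ i, ((x i).val + (y i).val) ^ 2) [MOD 2 ^ (k + 2)] := by
    refine modEq_sum _ _ _ _ fun i _ => sq_modEq k ?_
    have : ((x + y) i).val = ((x i).val + (y i).val) % 2 ^ (k + 1) := by
      simp [ZMod.val_add]
    rw [this]
    exact Nat.mod_modEq _ _
  have h2 : (∑ i, ((x i).val + (y i).val) ^ 2) =
      (∑ i, (x i).val ^ 2) + (∑ i, (y i).val ^ 2) +
        2 * ∑ i, (x i).val * (y i).val := by
    rw [Finset.mul_sum, ← Finset.sum_add_distrib, ← Finset.sum_add_distrib]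
    exact Finset.sum_congr rfl fun i _ => by ring
  rw [h2] at h1; exact h1

lemma wtE_neg (k : ℕ) (a : ZMod (2 ^ (k + 1))) : wtE (-a) = wtE a := by
  haveI : NeZero (2 ^ (k + 1)) := ⟨pow_ne_zero _ two_ne_zero⟩
  unfold wtE
  rw [ZMod.neg_val]
  by_cases h : a = 0
  · simp [h]
  · rw [if_neg h]
    have hle : a.val ≤ 2 ^ (k + 1) := le_of_lt (ZMod.val_lt a)
    rw [Nat.sub_sub_self hle, min_comm]

end aux

theorem doubly_even_subcode (m n : ℕ) (hm : 0 < m) (hn : 0 < n)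
    (C : AddSubgroup (Fin n → ZMod (2 ^ m)))
    (hC : (C : Set (Fin n → ZMod (2 ^ m))) = dualCode (C : Set (Fin n → ZMod (2 ^ m)))) :
    (0 ∈ deSub m n C) ∧
    (∀ x ∈ deSub m n C, ∀ y ∈ deSub m n C, x + y ∈ deSub m n C) ∧
    (∀ x ∈ deSub m n C, -x ∈ deSub m n C) ∧
    ((∃ c ∈ C, ¬ 2 ^ (m + 1) ∣ wtEv c) →
      Nat.card C = 2 * Nat.card ↥(deSub m n C)) := by
  obtain ⟨k, rfl⟩ : ∃ k, m = k + 1 := ⟨m - 1, (Nat.succ_pred_eq_of_pos hm).symm⟩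
  haveI : NeZero (2 ^ (k + 1)) := ⟨pow_ne_zero _ two_ne_zero⟩
  -- the dot product of two codewords vanishes
  have hdot : ∀ x ∈ C, ∀ y ∈ C, (2 ^ (k + 1)) ∣ ∑ i, (x i).val * (y i).val := by
    intro x hx y hy
    have hy' : y ∈ dualCode (C : Set (Fin n → ZMod (2 ^ (k + 1)))) := by
      rw [← hC]; exact hy
    have h0 : dotp x y = 0 := hy' x hx
    rw [← ZMod.natCast_eq_zero_iff]
    push_cast [ZMod.natCast_zmod_val]
    exact h0
  -- congruence for sums of weights
  have hadd : ∀ x ∈ C, ∀ y ∈ C,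
      wtEv (x + y) ≡ wtEv x + wtEv y [MOD 2 ^ (k + 2)] := by
    intro x hx y hy
    have h1 := wtEv_modEq_sum_sq k n (x + y)
    have h2 := sum_sq_add k n x y
    have h3 := (wtEv_modEq_sum_sq k n x).symm
    have h4 := (wtEv_modEq_sum_sq k n y).symm
    obtain ⟨t, ht⟩ := hdot x hx y hy
    have h5 : (∑ i, (x i).val ^ 2) + (∑ i, (y i).val ^ 2) +
        2 * ∑ i, (x i).val * (y i).val ≡
        (∑ i, (x i).val ^ 2) + (∑ i, (y i).val ^ 2) + 0 [MOD 2 ^ (k + 2)] := by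
      refine Nat.ModEq.add_left _ ?_
      rw [ht, ← mul_assoc]
      have : 2 * 2 ^ (k + 1) = 2 ^ (k + 2) := by ring
      rw [this]
      exact (Nat.modEq_zero_iff_dvd.mpr ⟨t, rfl⟩)
    calc wtEv (x + y) ≡ _ [MOD 2 ^ (k + 2)] := h1.trans (h2.trans h5)
      _ ≡ wtEv x + wtEv y [MOD 2 ^ (k + 2)] := by
          simpa using (h3.add h4)
  have hwneg : ∀ x : Fin n → ZMod (2 ^ (k + 1)), wtEv (-x) = wtEv x := by
    intro x
    unfold wtEv
    exact Finset.sum_congr rfl fun i _ => wtE_neg k (x i)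
  -- wtEv of any codeword is divisible by 2^(k+1)
  have hself : ∀ x ∈ C, 2 ^ (k + 1) ∣ wtEv x := by
    intro x hx
    have h1 := wtEv_modEq_sum_sq k n x
    have h2 : (2 : ℕ) ^ (k + 1) ∣ ∑ i, (x i).val ^ 2 := by
      have := hdot x hx x hx
      simpa [pow_two] using this
    have h1' : wtEv x ≡ (∑ i, (x i).val ^ 2) [MOD 2 ^ (k + 1)] := by
      have hd : (2 : ℕ) ^ (k + 1) ∣ 2 ^ (k + 2) := pow_dvd_pow 2 (by omega)
      exact h1.of_dvd hd
    exact (Nat.modEq_zero_iff_dvd).mp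
      (h1'.trans (Nat.modEq_zero_iff_dvd.mpr h2))
  refine ⟨⟨zero_mem C, by simp [wtEv, wtE, ZMod.val_zero]⟩, ?_, ?_, ?_⟩
  · -- closure under addition
    rintro x ⟨hxC, hxw⟩ y ⟨hyC, hyw⟩
    refine ⟨add_mem hxC hyC, ?_⟩
    have h := hadd x hxC y hyC
    have : wtEv x + wtEv y ≡ 0 [MOD 2 ^ (k + 2)] :=
      Nat.modEq_zero_iff_dvd.mpr (Nat.dvd_add hxw hyw)
    exact Nat.modEq_zero_iff_dvd.mp (h.trans this)
  · rintro x ⟨hxC, hxw⟩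
    exact ⟨neg_mem hxC, by rwa [hwneg]⟩
  · -- index 2
    rintro ⟨c, hcC, hcw⟩
    classical
    set S : Set (Fin n → ZMod (2 ^ (k + 1))) := (C : Set (Fin n → ZMod (2 ^ (k + 1)))) with hS
    set S0 : Set (Fin n → ZMod (2 ^ (k + 1))) := deSub (k + 1) n C with hS0
    have hsub : S0 ⊆ S := fun x hx => hx.1
    -- wtEv of non-doubly-even codewords is ≡ 2^(k+1) mod 2^(k+2)
    have hmod : ∀ x ∈ C, ¬ 2 ^ (k + 2) ∣ wtEv x →
        wtEv x ≡ 2 ^ (k + 1) [MOD 2 ^ (k + 2)] := by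
      intro x hx hnd
      obtain ⟨t, ht⟩ := hself x hx
      rcases Nat.even_or_odd t with he | ho
      · obtain ⟨s, hs⟩ := he
        exact absurd ⟨s, by rw [ht, hs]; ring⟩ hnd
      · obtain ⟨s, hs⟩ := ho
        rw [ht, hs]
        have : 2 ^ (k + 1) * (2 * s + 1) = 2 ^ (k + 2) * s + 2 ^ (k + 1) := by ring
        rw [this]
        simpa using Nat.ModEq.add_right (2 ^ (k + 1))
          (Nat.modEq_zero_iff_dvd.mpr ⟨s, rfl⟩ : 2 ^ (k + 2) * s ≡ 0 [MOD 2 ^ (k + 2)])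
    -- the translation by c maps S0 bijectively onto S \ S0
    have himg : (fun x => x + c) '' S0 = S \ S0 := by
      ext y
      constructor
      · rintro ⟨x, ⟨hxC, hxw⟩, rfl⟩
        refine ⟨add_mem hxC hcC, fun hmem => ?_⟩
        have h := hadd x hxC c hcC
        have hc2 : ¬ 2 ^ (k + 2) ∣ wtEv (x + c) := by
          intro hd
          have : wtEv x + wtEv c ≡ 0 [MOD 2 ^ (k + 2)] :=
            (h.symm.trans (Nat.modEq_zero_iff_dvd.mpr hd))
          have hxc : 2 ^ (k + 2) ∣ wtEv x + wtEv c := Nat.modEq_zero_iff_dvd.mp this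
          exact hcw ((Nat.dvd_add_right hxw).mp hxc)
        exact hc2 hmem.2
      · rintro ⟨hyS, hyn⟩
        have hyC : y ∈ C := hyS
        have hynd : ¬ 2 ^ (k + 2) ∣ wtEv y := fun h => hyn ⟨hyC, h⟩
        refine ⟨y - c, ⟨sub_mem hyC hcC, ?_⟩, by ring⟩
        have h := hadd y hyC (-c) (neg_mem hcC)
        rw [hwneg] at h
        have hy2 := hmod y hyC hynd
        have hc2 := hmod c hcC hcw
        have : wtEv y + wtEv c ≡ 2 ^ (k + 1) + 2 ^ (k + 1) [MOD 2 ^ (k + 2)] :=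
          hy2.add hc2
        have h0 : wtEv y + wtEv c ≡ 0 [MOD 2 ^ (k + 2)] := by
          have : (2 : ℕ) ^ (k + 1) + 2 ^ (k + 1) = 2 ^ (k + 2) := by ring
          calc wtEv y + wtEv c ≡ 2 ^ (k + 1) + 2 ^ (k + 1) [MOD 2 ^ (k + 2)] :=
              hy2.add hc2
            _ ≡ 0 [MOD 2 ^ (k + 2)] := by
              rw [this]; exact Nat.modEq_zero_iff_dvd.mpr dvd_rfl
        have h' : wtEv (y - c) ≡ wtEv y + wtEv c [MOD 2 ^ (k + 2)] := by
          rw [sub_eq_add_neg]; exact h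
        exact Nat.modEq_zero_iff_dvd.mp (h'.trans h0)
    have hinj : Function.Injective (fun x : Fin n → ZMod (2 ^ (k + 1)) => x + c) :=
      fun a b h => by simpa using h
    have hcard1 : (S \ S0).ncard = S0.ncard := by
      rw [← himg, Set.ncard_image_of_injective _ hinj]
    have hfinS : S.Finite := Set.toFinite S
    have hcard2 : S.ncard = S0.ncard + (S \ S0).ncard := by
      rw [← Set.ncard_union_eq Set.disjoint_sdiff_right (Set.toFinite _) (Set.toFinite _),
        Set.union_diff_cancel hsub]
    have : S.ncard = 2 * S0.ncard := by omega
    calc Nat.card C = S.ncard := Nat.card_coe_set_eq S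
      _ = 2 * S0.ncard := this
      _ = 2 * Nat.card ↥S0 := by rw [Nat.card_coe_set_eq]
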